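/- For all integers n ≥ 0, 0 < p ≤ 1, q = 1 - p, and 0 < a < 1, we have ∑_{k=0}^{n} (1/(k+1)^a) · C(n,k) p^k q^{n-k} ≤ (1/p) · (1 - q^{n+1})/(n+1)^a. -/

import Mathlib

open Finset

theorem stmt_0 (n : ℕ) (p a : ℝ) (hp : 0 < p) (hp1 : p ≤ 1) (ha : 0 < a) (ha1 : a < 1) :
    ∑ k ∈ range (n + 1),
        (1 / ((k : ℝ) + 1) ^ a) * (n.choose k : ℝ) * p ^ k * (1 - p) ^ (n - k)
      ≤ (1 / p) * (1 - (1 - p) ^ (n + 1)) / ((n : ℝ) + 1) ^ a := by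
  set q : ℝ := 1 - p with hq
  have hq0 : 0 ≤ q := by simp only [hq]; linarith
  -- key identity
  have key : ∑ k ∈ range (n + 1),
      (((n : ℝ) + 1) / ((k : ℝ) + 1)) * (n.choose k : ℝ) * p ^ k * q ^ (n - k)
      = (1 - q ^ (n + 1)) / p := by
    rw [eq_div_iff hp.ne']
    have step : ∀ k ∈ range (n + 1),
        (((n : ℝ) + 1) / ((k : ℝ) + 1)) * (n.choose k : ℝ) * p ^ k * q ^ (n - k) * p
          = ((n + 1).choose (k + 1) : ℝ) * p ^ (k + 1) * q ^ ((n + 1) - (k + 1)) := by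
      intro k hk
      have hnat := Nat.add_one_mul_choose_eq n k
      have hch : ((n : ℝ) + 1) * (n.choose k : ℝ) = ((n + 1).choose (k + 1) : ℝ) * ((k : ℝ) + 1) := by
        exact_mod_cast hnat
      have hk1 : ((k : ℝ) + 1) ≠ 0 := by positivity
      have hnk : (n + 1) - (k + 1) = n - k := by omega
      rw [hnk, div_mul_eq_mul_div, div_mul_eq_mul_div, div_mul_eq_mul_div, div_mul_eq_mul_div,
        div_eq_iff hk1]
      linear_combination (p ^ k * q ^ (n - k) * p) * hch
    rw [Finset.sum_mul, Finset.sum_congr rfl step]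
    have expand : (p + q) ^ (n + 1)
        = ∑ j ∈ range (n + 2), ((n + 1).choose j : ℝ) * p ^ j * q ^ ((n + 1) - j) := by
      rw [add_pow]
      refine Finset.sum_congr rfl fun j _ => by ring
    have hpq : p + q = 1 := by simp [hq]
    have split := Finset.sum_range_succ' (fun j => ((n + 1).choose j : ℝ) * p ^ j * q ^ ((n + 1) - j)) (n + 1)
    simp only [Nat.choose_zero_right, Nat.cast_one, pow_zero, Nat.sub_zero] at split
    have : (1 : ℝ) = ∑ j ∈ range (n + 2), ((n + 1).choose j : ℝ) * p ^ j * q ^ ((n + 1) - j) := by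
      rw [← expand, hpq, one_pow]
    rw [this, split]
    ring
  -- termwise bound
  have hn1 : (0 : ℝ) < (n : ℝ) + 1 := by positivity
  have bound : ∀ k ∈ range (n + 1),
      (1 / ((k : ℝ) + 1) ^ a) * (n.choose k : ℝ) * p ^ k * q ^ (n - k)
        ≤ (1 / ((n : ℝ) + 1) ^ a) *
          ((((n : ℝ) + 1) / ((k : ℝ) + 1)) * (n.choose k : ℝ) * p ^ k * q ^ (n - k)) := by
    intro k hk
    have hkn : k ≤ n := by simpa [Nat.lt_succ_iff] using Finset.mem_range.mp hk
    have hk1 : (0 : ℝ) < (k : ℝ) + 1 := by positivity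
    have hr1 : (1 : ℝ) ≤ ((n : ℝ) + 1) / ((k : ℝ) + 1) := by
      rw [le_div_iff₀ hk1]
      have : (k : ℝ) ≤ (n : ℝ) := by exact_mod_cast hkn
      linarith
    have hrp : (((n : ℝ) + 1) / ((k : ℝ) + 1)) ^ a ≤ (((n : ℝ) + 1) / ((k : ℝ) + 1)) ^ (1 : ℝ) :=
      Real.rpow_le_rpow_of_exponent_le hr1 (le_of_lt ha1)
    rw [Real.rpow_one, Real.div_rpow hn1.le hk1.le] at hrp
    have hmain : 1 / ((k : ℝ) + 1) ^ a ≤ (1 / ((n : ℝ) + 1) ^ a) * (((n : ℝ) + 1) / ((k : ℝ) + 1)) := by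
      have hka : (0 : ℝ) < ((k : ℝ) + 1) ^ a := Real.rpow_pos_of_pos hk1 a
      have hna : (0 : ℝ) < ((n : ℝ) + 1) ^ a := Real.rpow_pos_of_pos hn1 a
      rw [div_le_div_iff₀ hka hk1] at hrp
      have heq : (1 : ℝ) / ((n : ℝ) + 1) ^ a * (((n : ℝ) + 1) / ((k : ℝ) + 1))
          = ((n : ℝ) + 1) / (((n : ℝ) + 1) ^ a * ((k : ℝ) + 1)) := by
        rw [div_mul_div_comm, one_mul]
      rw [heq, div_le_div_iff₀ hka (by positivity)]
      linarith
    have hfac : (0 : ℝ) ≤ (n.choose k : ℝ) * p ^ k * q ^ (n - k) := by positivity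
    calc (1 / ((k : ℝ) + 1) ^ a) * (n.choose k : ℝ) * p ^ k * q ^ (n - k)
        = (1 / ((k : ℝ) + 1) ^ a) * ((n.choose k : ℝ) * p ^ k * q ^ (n - k)) := by ring
      _ ≤ ((1 / ((n : ℝ) + 1) ^ a) * (((n : ℝ) + 1) / ((k : ℝ) + 1))) *
            ((n.choose k : ℝ) * p ^ k * q ^ (n - k)) := mul_le_mul_of_nonneg_right hmain hfac
      _ = (1 / ((n : ℝ) + 1) ^ a) *
          ((((n : ℝ) + 1) / ((k : ℝ) + 1)) * (n.choose k : ℝ) * p ^ k * q ^ (n - k)) := by ring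
  calc ∑ k ∈ range (n + 1),
        (1 / ((k : ℝ) + 1) ^ a) * (n.choose k : ℝ) * p ^ k * q ^ (n - k)
      ≤ ∑ k ∈ range (n + 1), (1 / ((n : ℝ) + 1) ^ a) *
          ((((n : ℝ) + 1) / ((k : ℝ) + 1)) * (n.choose k : ℝ) * p ^ k * q ^ (n - k)) :=
        Finset.sum_le_sum bound
    _ = (1 / ((n : ℝ) + 1) ^ a) * ∑ k ∈ range (n + 1),
          (((n : ℝ) + 1) / ((k : ℝ) + 1)) * (n.choose k : ℝ) * p ^ k * q ^ (n - k) := by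
        rw [Finset.mul_sum]
    _ = (1 / ((n : ℝ) + 1) ^ a) * ((1 - q ^ (n + 1)) / p) := by rw [key]
    _ = (1 / p) * (1 - q ^ (n + 1)) / ((n : ℝ) + 1) ^ a := by
        ring
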